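/- Let B⊗_χ A be a twisted tensor product and C an algebra. Given algebra homomorphisms φ : A → C and ψ : B → C, there exists an algebra homomorphism Ψ : B⊗_χ A → C with Ψ∘i_A = φ and Ψ∘i_B = ψ if and only if μ_C∘(φ⊗ψ) = μ_C∘(ψ⊗φ)∘χ; moreover such Ψ is unique. -/
import Mathlib


open TensorProduct LinearMap

variable (K : Type*)

def IsTwistingMap {A B : Type*} [Field K] [Ring A] [Ring B] [Algebra K A] [Algebra K B]
    (χ : A ⊗[K] B →ₗ[K] B ⊗[K] A) : Prop :=
  (∀ b : B, χ ((1 : A) ⊗ₜ[K] b) = b ⊗ₜ[K] (1 : A)) ∧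
  (∀ a : A, χ (a ⊗ₜ[K] (1 : B)) = (1 : B) ⊗ₜ[K] a) ∧
  (∀ (a a' : A) (b : B),
    χ ((a * a') ⊗ₜ[K] b) =
      lTensor B (mul' K A)
        (TensorProduct.assoc K B A A
          (rTensor A χ
            ((TensorProduct.assoc K A B A).symm (a ⊗ₜ[K] χ (a' ⊗ₜ[K] b)))))) ∧
  (∀ (a : A) (b b' : B),
    χ (a ⊗ₜ[K] (b * b')) =
      rTensor A (mul' K B)
        ((TensorProduct.assoc K B B A).symm
          (lTensor B χ
            (TensorProduct.assoc K B A B (χ (a ⊗ₜ[K] b) ⊗ₜ[K] b')))))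

noncomputable def twistMul {A B : Type*} [Field K] [Ring A] [Ring B] [Algebra K A] [Algebra K B]
    (χ : A ⊗[K] B →ₗ[K] B ⊗[K] A) :
    (B ⊗[K] A) ⊗[K] (B ⊗[K] A) →ₗ[K] B ⊗[K] A :=
  TensorProduct.map (mul' K B) (mul' K A)
    ∘ₗ (TensorProduct.assoc K B B (A ⊗[K] A)).symm.toLinearMap
    ∘ₗ lTensor B (TensorProduct.assoc K B A A).toLinearMap
    ∘ₗ lTensor B (rTensor A χ)
    ∘ₗ lTensor B (TensorProduct.assoc K A B A).symm.toLinearMap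
    ∘ₗ (TensorProduct.assoc K B A (B ⊗[K] A)).toLinearMap

set_option synthInstance.maxHeartbeats 1000000 in
lemma twistMul_tmul {A B : Type*} [Field K] [Ring A] [Ring B] [Algebra K A] [Algebra K B]
    (χ : A ⊗[K] B →ₗ[K] B ⊗[K] A) (b : B) (a : A) (b' : B) (a' : A) :
    twistMul K χ ((b ⊗ₜ[K] a) ⊗ₜ[K] (b' ⊗ₜ[K] a')) =
      TensorProduct.map (LinearMap.mulLeft K b) (LinearMap.mulRight K a') (χ (a ⊗ₜ[K] b')) := by
  simp only [twistMul, LinearMap.comp_apply, LinearEquiv.coe_coe, TensorProduct.assoc_tmul,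
    TensorProduct.assoc_symm_tmul, lTensor_tmul, rTensor_tmul]
  generalize χ (a ⊗ₜ[K] b') = t
  induction t using TensorProduct.induction_on with
  | zero => simp
  | tmul p q => simp
  | add s t hs ht => simp only [add_tmul, tmul_add, map_add, hs, ht]

theorem twisted_tensor_universal_property {A B C : Type*} [Field K] [Ring A] [Ring B] [Ring C]
    [Algebra K A] [Algebra K B] [Algebra K C]
    (χ : A ⊗[K] B →ₗ[K] B ⊗[K] A) (hχ : IsTwistingMap K χ)
    (φ : A →ₐ[K] C) (ψ : B →ₐ[K] C) :
    (∃! Ψ : B ⊗[K] A →ₗ[K] C,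
        (∀ x y : B ⊗[K] A, Ψ (twistMul K χ (x ⊗ₜ[K] y)) = Ψ x * Ψ y) ∧
        Ψ ((1 : B) ⊗ₜ[K] (1 : A)) = 1 ∧
        (∀ a : A, Ψ ((1 : B) ⊗ₜ[K] a) = φ a) ∧
        (∀ b : B, Ψ (b ⊗ₜ[K] (1 : A)) = ψ b)) ↔
      ∀ (a : A) (b : B),
        φ a * ψ b = mul' K C (TensorProduct.map ψ.toLinearMap φ.toLinearMap (χ (a ⊗ₜ[K] b))) := by
  obtain ⟨h1, h2, h3, h4⟩ := hχ
  have h11 : χ ((1 : A) ⊗ₜ[K] (1 : B)) = (1 : B) ⊗ₜ[K] (1 : A) := h1 1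
  set Ψ₀ : B ⊗[K] A →ₗ[K] C :=
    mul' K C ∘ₗ TensorProduct.map ψ.toLinearMap φ.toLinearMap with hΨ₀
  have hΨ₀apply : ∀ (b : B) (a : A), Ψ₀ (b ⊗ₜ[K] a) = ψ b * φ a := by
    intro b a; simp [hΨ₀]
  -- any Ψ satisfying the conditions equals Ψ₀
  have hpure : ∀ Ψ : B ⊗[K] A →ₗ[K] C,
      (∀ x y : B ⊗[K] A, Ψ (twistMul K χ (x ⊗ₜ[K] y)) = Ψ x * Ψ y) →
      (∀ a : A, Ψ ((1 : B) ⊗ₜ[K] a) = φ a) →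
      (∀ b : B, Ψ (b ⊗ₜ[K] (1 : A)) = ψ b) → Ψ = Ψ₀ := by
    intro Ψ hmul hA hB
    apply TensorProduct.ext'
    intro b a
    have := hmul (b ⊗ₜ[K] (1 : A)) ((1 : B) ⊗ₜ[K] a)
    rw [twistMul_tmul, h11] at this
    simp only [TensorProduct.map_tmul, LinearMap.mulLeft_apply, LinearMap.mulRight_apply,
      mul_one, one_mul, hA, hB] at this
    rw [this, hΨ₀apply]
  -- Ψ₀ twisted against mulLeft/mulRight
  have hΨ₀key : ∀ (b : B) (a' : A) (t : B ⊗[K] A),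
      Ψ₀ (TensorProduct.map (LinearMap.mulLeft K b) (LinearMap.mulRight K a') t) =
        ψ b * Ψ₀ t * φ a' := by
    intro b a' t
    induction t using TensorProduct.induction_on with
    | zero => simp
    | tmul p q =>
        simp only [TensorProduct.map_tmul, LinearMap.mulLeft_apply, LinearMap.mulRight_apply,
          hΨ₀apply, map_mul, mul_assoc]
    | add s t hs ht => simp only [map_add, hs, ht, mul_add, add_mul]
  constructor
  · rintro ⟨Ψ, ⟨hmul, hone, hA, hB⟩, -⟩ a b
    have hΨ : Ψ = Ψ₀ := hpure Ψ hmul hA hB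
    have := hmul ((1 : B) ⊗ₜ[K] a) (b ⊗ₜ[K] (1 : A))
    rw [twistMul_tmul, hA, hB, hΨ] at this
    rw [← this, LinearMap.mulLeft_one, LinearMap.mulRight_one]
    simp [hΨ₀]
  · intro hC
    refine ⟨Ψ₀, ⟨?_, ?_, ?_, ?_⟩, fun Ψ h => hpure Ψ h.1 h.2.2.1 h.2.2.2⟩
    · intro x y
      induction x using TensorProduct.induction_on with
      | zero => simp
      | tmul b a =>
          induction y using TensorProduct.induction_on with
          | zero => simp
          | tmul b' a' =>
              rw [twistMul_tmul, hΨ₀key, hΨ₀apply, hΨ₀apply]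
              have := hC a b'
              rw [hΨ₀, LinearMap.comp_apply, ← this]
              simp only [mul_assoc]
          | add s t hs ht => simp only [tmul_add, map_add, hs, ht, mul_add]
      | add s t hs ht => simp only [add_tmul, map_add, hs, ht, add_mul]
    · simp [hΨ₀apply]
    · intro a; simp [hΨ₀apply]
    · intro b; simp [hΨ₀apply]
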